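/- If X is an exponentially distributed random variable with rate λ > 0, then E[ln X] = −ln λ − γ, where γ is the Euler–Mascheroni constant. -/

import Mathlib

open MeasureTheory Real ProbabilityTheory Set Filter Asymptotics Topology
open scoped ENNReal NNReal

lemma aux_mellin :
    MellinConvergent (fun t : ℝ => Real.log t • ((Real.exp (-t) : ℝ) : ℂ)) 1 ∧
      HasDerivAt (mellin fun x : ℝ => ((Real.exp (-x) : ℝ) : ℂ))
        (mellin (fun t : ℝ => Real.log t • ((Real.exp (-t) : ℝ) : ℂ)) 1) 1 := by
  refine mellin_hasDerivAt_of_isBigO_rpow (a := 2) (b := 0) ?_ ?_ (by norm_num) ?_ (by norm_num)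
  · refine (Continuous.continuousOn ?_).locallyIntegrableOn measurableSet_Ioi
    exact Complex.continuous_ofReal.comp (Real.continuous_exp.comp continuous_neg)
  · rw [← isBigO_norm_left]
    simp_rw [Complex.norm_real, isBigO_norm_left]
    simpa only [neg_one_mul] using (isLittleO_exp_neg_mul_rpow_atTop zero_lt_one _).isBigO
  · simp_rw [neg_zero, Real.rpow_zero]
    refine isBigO_const_of_tendsto (?_ : Tendsto _ _ (𝓝 (1 : ℂ))) one_ne_zero
    rw [(by simp : (1 : ℂ) = Real.exp (-0))]
    exact (Complex.continuous_ofReal.comp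
      (Real.continuous_exp.comp continuous_neg)).continuousWithinAt

lemma aux_coe_eq (t : ℝ) :
    ((t : ℂ) ^ ((1 : ℂ) - 1)) • (Real.log t • ((Real.exp (-t) : ℝ) : ℂ))
      = ((Real.exp (-t) * Real.log t : ℝ) : ℂ) := by
  simp only [sub_self, Complex.cpow_zero, one_smul, Complex.real_smul, Complex.ofReal_mul]
  ring

lemma integrable_exp_neg_mul_log :
    IntegrableOn (fun t : ℝ => Real.exp (-t) * Real.log t) (Ioi 0) := by
  have h := aux_mellin.1
  unfold MellinConvergent at h
  have h2 : IntegrableOn (fun t : ℝ => ((Real.exp (-t) * Real.log t : ℝ) : ℂ)) (Ioi 0) := by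
    refine h.congr_fun (fun t _ => aux_coe_eq t) measurableSet_Ioi
  have h3 := h2.re
  simp [← Complex.ofReal_neg, Complex.exp_ofReal_re] at h3
  exact h3

lemma integral_exp_neg_mul_log :
    ∫ t in Ioi 0, Real.exp (-t) * Real.log t = -Real.eulerMascheroniConstant := by
  have hmeq : mellin (fun x : ℝ => ((Real.exp (-x) : ℝ) : ℂ)) = Complex.GammaIntegral :=
    (Complex.GammaIntegral_eq_mellin).symm
  have hd := aux_mellin.2
  rw [hmeq] at hd
  have hG : HasDerivAt Complex.Gamma
      (mellin (fun t : ℝ => Real.log t • ((Real.exp (-t) : ℝ) : ℂ)) 1) 1 := by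
    refine hd.congr_of_eventuallyEq ?_
    have hopen : {s : ℂ | 0 < s.re} ∈ 𝓝 (1 : ℂ) := by
      refine (isOpen_lt continuous_const Complex.continuous_re).mem_nhds ?_
      simp
    filter_upwards [hopen] with s hs
    exact Complex.Gamma_eq_integral hs
  have huniq := hG.unique Complex.hasDerivAt_Gamma_one
  have hint : mellin (fun t : ℝ => Real.log t • ((Real.exp (-t) : ℝ) : ℂ)) 1
      = ((∫ t in Ioi 0, Real.exp (-t) * Real.log t : ℝ) : ℂ) := by
    rw [mellin]
    rw [show (fun t : ℝ => ((t : ℂ) ^ ((1:ℂ) - 1)) • (Real.log t • ((Real.exp (-t) : ℝ) : ℂ)))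
        = fun t : ℝ => ((Real.exp (-t) * Real.log t : ℝ) : ℂ) from funext aux_coe_eq]
    exact integral_ofReal
  rw [hint] at huniq
  exact_mod_cast huniq

lemma integral_exp_scaled_log {l : ℝ} (hl : 0 < l) :
    ∫ x in Ioi 0, l * Real.exp (-(l * x)) * Real.log x
      = -Real.log l - Real.eulerMascheroniConstant := by
  have key : ∫ x in Ioi 0, Real.exp (-(l * x)) * Real.log x
      = l⁻¹ * ∫ u in Ioi 0, Real.exp (-u) * Real.log (u / l) := by
    have := integral_comp_mul_left_Ioi (fun u => Real.exp (-u) * Real.log (u / l)) 0 hl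
    simp only [mul_zero, smul_eq_mul] at this
    rw [← this]
    refine setIntegral_congr_fun measurableSet_Ioi (fun x hx => ?_)
    rw [mul_div_cancel_left₀ _ hl.ne']
  have hsplit : ∫ u in Ioi 0, Real.exp (-u) * Real.log (u / l)
      = -Real.eulerMascheroniConstant - Real.log l := by
    have heq : ∀ u ∈ Ioi (0:ℝ), Real.exp (-u) * Real.log (u / l)
        = Real.exp (-u) * Real.log u - Real.log l * Real.exp (-u) := by
      intro u hu
      rw [Real.log_div (ne_of_gt hu) hl.ne']
      ring
    rw [setIntegral_congr_fun measurableSet_Ioi heq]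
    have hi : IntegrableOn (fun u : ℝ => Real.log l * Real.exp (-u)) (Ioi 0) := by
      have := (exp_neg_integrableOn_Ioi 0 one_pos).const_mul (Real.log l)
      simp at this
      exact this
    rw [integral_sub integrable_exp_neg_mul_log hi, integral_exp_neg_mul_log,
      integral_const_mul, integral_exp_neg_Ioi_zero, mul_one]
  calc ∫ x in Ioi 0, l * Real.exp (-(l * x)) * Real.log x
      = l * ∫ x in Ioi 0, Real.exp (-(l * x)) * Real.log x := by
        rw [← integral_const_mul]
        refine setIntegral_congr_fun measurableSet_Ioi (fun x _ => by ring)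
    _ = l * (l⁻¹ * (-Real.eulerMascheroniConstant - Real.log l)) := by rw [key, hsplit]
    _ = -Real.log l - Real.eulerMascheroniConstant := by
        field_simp
        ring

theorem stmt_2 {Ω : Type*} [MeasurableSpace Ω] (μ : Measure Ω) [IsProbabilityMeasure μ]
    (X : Ω → ℝ) (hX : Measurable X) (l : ℝ) (hl : 0 < l)
    (hlaw : Measure.map X μ = expMeasure l) :
    (∫ ω, Real.log (X ω) ∂μ) = -Real.log l - Real.eulerMascheroniConstant := by
  have h1 : (∫ ω, Real.log (X ω) ∂μ) = ∫ x, Real.log x ∂(Measure.map X μ) :=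
    (integral_map hX.aemeasurable Real.measurable_log.aestronglyMeasurable).symm
  rw [h1, hlaw]
  have hdens : expMeasure l
      = volume.withDensity (fun x => ((exponentialPDFReal l x).toNNReal : ℝ≥0∞)) := rfl
  rw [hdens, integral_withDensity_eq_integral_smul
    (measurable_exponentialPDFReal l).real_toNNReal]
  have hF : (fun x => (exponentialPDFReal l x).toNNReal • Real.log x)
      = fun x => exponentialPDFReal l x * Real.log x := by
    funext x
    rw [NNReal.smul_def, smul_eq_mul, Real.coe_toNNReal _ (exponentialPDFReal_nonneg hl x)]
  rw [hF]
  have hzero : ∀ x ∉ Ioi (0:ℝ), exponentialPDFReal l x * Real.log x = 0 := by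
    intro x hx
    rcases lt_or_eq_of_le (not_lt.mp (by simpa using hx) : x ≤ 0) with h | h
    · simp [exponentialPDFReal, gammaPDFReal, not_le.mpr h]
    · simp [h]
  rw [← setIntegral_eq_integral_of_forall_compl_eq_zero hzero]
  have : ∀ x ∈ Ioi (0:ℝ), exponentialPDFReal l x * Real.log x
      = l * Real.exp (-(l * x)) * Real.log x := by
    intro x hx
    simp [exponentialPDFReal, gammaPDFReal, le_of_lt (mem_Ioi.mp hx)]
  rw [setIntegral_congr_fun measurableSet_Ioi this]
  exact integral_exp_scaled_log hl
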